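/- Let X and Y be topological spaces such that TWO has a winning strategy in the Menger game G_fin(𝒪_X, 𝒪_X) on X and TWO has a winning strategy in the Menger game G_fin(𝒪_Y, 𝒪_Y) on Y. Then TWO has a winning strategy in the Menger game G_fin(𝒪_{X×Y}, 𝒪_{X×Y}) on the product space X × Y. -/

import Mathlib

open Set

/-- `GDom R` is the set of dominating families of the relation `R`:
sets `Z ⊆ B` such that every `a ∈ A` is dominated by some `b ∈ Z`. -/
def GDom {α β : Type*} (R : α → β → Prop) : Set (Set β) :=
  {Z | ∀ a : α, ∃ b ∈ Z, R a b}

/-- A relation is total: every element of the domain is dominated by something. -/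
def IsTotalRel {α β : Type*} (R : α → β → Prop) : Prop :=
  ∀ a : α, ∃ b : β, R a b

/-- The product of two relations. -/
def GProd {α β α' β' : Type*} (R : α → β → Prop) (R' : α' → β' → Prop) :
    α × α' → β × β' → Prop :=
  fun a b => R a.1 b.1 ∧ R' a.2 b.2

/-- The finite history consisting of the first `n` moves of the sequence `b`. -/
def GHist {β : Type*} (b : ℕ → β) (n : ℕ) : List β :=
  List.ofFn fun i : Fin n => b i

/-- ONE has a winning strategy in the game `G(P,Q)`: in inning `n` ONE plays `aₙ ∈ A`,
TWO answers `bₙ` with `R aₙ bₙ`; ONE wins iff `{bₙ : n} ∈ GDom T`. -/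
def OneWinsG {α β γ : Type*} (R : α → β → Prop) (T : γ → β → Prop) : Prop :=
  ∃ σ : List β → α, ∀ b : ℕ → β,
    (∀ n, R (σ (GHist b n)) (b n)) → Set.range b ∈ GDom T

/-- TWO has a winning strategy in the game `G(P,Q)`. -/
def TwoWinsG {α β γ : Type*} (R : α → β → Prop) (T : γ → β → Prop) : Prop :=
  ∃ τ : List α → β, ∀ a : ℕ → α,
    (∀ n, R (a n) (τ (GHist a (n + 1)))) ∧
    Set.range (fun n => τ (GHist a (n + 1))) ∉ GDom T

/-- ONE has a winning strategy in the game `G₁(𝒜,ℬ)`: in inning `n` ONE plays `Aₙ ∈ 𝒜`,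
TWO answers `bₙ ∈ Aₙ`; TWO wins iff `{bₙ : n} ∈ ℬ`. -/
def OneWinsG1 {β : Type*} (𝒜 ℬ : Set (Set β)) : Prop :=
  ∃ σ : List β → Set β, (∀ h, σ h ∈ 𝒜) ∧
    ∀ b : ℕ → β, (∀ n, b n ∈ σ (GHist b n)) → Set.range b ∉ ℬ

/-- TWO has a winning strategy in the game `G₁(𝒜,ℬ)`. -/
def TwoWinsG1 {β : Type*} (𝒜 ℬ : Set (Set β)) : Prop :=
  ∃ τ : List (Set β) → β, ∀ S : ℕ → Set β, (∀ n, S n ∈ 𝒜) →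
    (∀ n, τ (GHist S (n + 1)) ∈ S n) ∧
    Set.range (fun n => τ (GHist S (n + 1))) ∈ ℬ

/-- TWO has a winning strategy in the game `G_fin(𝒜,ℬ)`: in inning `n` ONE plays `Aₙ ∈ 𝒜`,
TWO answers a finite `Fₙ ⊆ Aₙ`; TWO wins iff `⋃ₙ Fₙ ∈ ℬ`. -/
def TwoWinsGfin {β : Type*} (𝒜 ℬ : Set (Set β)) : Prop :=
  ∃ τ : List (Set β) → Set β, ∀ S : ℕ → Set β, (∀ n, S n ∈ 𝒜) →
    (∀ n, τ (GHist S (n + 1)) ⊆ S n ∧ (τ (GHist S (n + 1))).Finite) ∧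
    (⋃ n, τ (GHist S (n + 1))) ∈ ℬ

/-- `(𝒜,ℬ)`-Lindelöf: every member of `𝒜` has a countable subset belonging to `ℬ`. -/
def LindelofFam {β : Type*} (𝒜 ℬ : Set (Set β)) : Prop :=
  ∀ S ∈ 𝒜, ∃ C ⊆ S, C.Countable ∧ C ∈ ℬ

/-- The selection principle `S₁(𝒜,ℬ)`. -/
def SelS1 {β : Type*} (𝒜 ℬ : Set (Set β)) : Prop :=
  ∀ A : ℕ → Set β, (∀ n, A n ∈ 𝒜) →
    ∃ b : ℕ → β, (∀ n, b n ∈ A n) ∧ Set.range b ∈ ℬ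

/-- The selection principle `S_fin(𝒜,ℬ)`. -/
def SelSfin {β : Type*} (𝒜 ℬ : Set (Set β)) : Prop :=
  ∀ A : ℕ → Set β, (∀ n, A n ∈ 𝒜) →
    ∃ F : ℕ → Set β, (∀ n, F n ⊆ A n ∧ (F n).Finite) ∧ (⋃ n, F n) ∈ ℬ

/-- `𝒪_X`: the family of open covers of `X`. -/
def OpenCovers (X : Type*) [TopologicalSpace X] : Set (Set (Set X)) :=
  {𝒰 | (∀ U ∈ 𝒰, IsOpen U) ∧ ⋃₀ 𝒰 = Set.univ}

/-- ONE has a winning strategy in the point-open game on `X`. -/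
def OneWinsPointOpen (X : Type*) [TopologicalSpace X] : Prop :=
  ∃ σ : List (Set X) → X, ∀ U : ℕ → Set X,
    (∀ n, IsOpen (U n) ∧ σ (GHist U n) ∈ U n) → Set.range U ∈ OpenCovers X

/-- TWO has a winning strategy in the point-open game on `X`. -/
def TwoWinsPointOpen (X : Type*) [TopologicalSpace X] : Prop :=
  ∃ τ : List X → Set X, ∀ x : ℕ → X,
    (∀ n, IsOpen (τ (GHist x (n + 1))) ∧ x n ∈ τ (GHist x (n + 1))) ∧
    Set.range (fun n => τ (GHist x (n + 1))) ∉ OpenCovers X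

/-- `𝔇_X`: the family of dense subsets of `X`. -/
def DenseSets (X : Type*) [TopologicalSpace X] : Set (Set X) :=
  {D | Dense D}

/-- ONE has a winning strategy in the point-picking game `G^D_ω(X)` of Berner and Juhász. -/
def OneWinsPointPicking (X : Type*) [TopologicalSpace X] : Prop :=
  ∃ σ : List X → Set X, (∀ h, IsOpen (σ h) ∧ (σ h).Nonempty) ∧
    ∀ x : ℕ → X, (∀ n, x n ∈ σ (GHist x n)) → Dense (Set.range x)

/-- TWO has a winning strategy in the point-picking game `G^D_ω(X)`. -/
def TwoWinsPointPicking (X : Type*) [TopologicalSpace X] : Prop :=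
  ∃ τ : List (Set X) → X, ∀ U : ℕ → Set X,
    (∀ n, IsOpen (U n) ∧ (U n).Nonempty) →
    (∀ n, τ (GHist U (n + 1)) ∈ U n) ∧
    ¬ Dense (Set.range fun n => τ (GHist U (n + 1)))

/-- `𝒟_X`: families of open sets whose union is dense in `X`. -/
def DenseUnionFams (X : Type*) [TopologicalSpace X] : Set (Set (Set X)) :=
  {𝒰 | (∀ U ∈ 𝒰, IsOpen U) ∧ Dense (⋃₀ 𝒰)}

/-- ONE has a winning strategy in Tkachuk's game `θ(X)`. -/
def OneWinsTheta (X : Type*) [TopologicalSpace X] : Prop :=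
  ∃ σ : List (Set X) → X, ∀ U : ℕ → Set X,
    (∀ n, IsOpen (U n) ∧ σ (GHist U n) ∈ U n) → Dense (⋃ n, U n)

/-- TWO has a winning strategy in Tkachuk's game `θ(X)`. -/
def TwoWinsTheta (X : Type*) [TopologicalSpace X] : Prop :=
  ∃ τ : List X → Set X, ∀ x : ℕ → X,
    (∀ n, IsOpen (τ (GHist x (n + 1))) ∧ x n ∈ τ (GHist x (n + 1))) ∧
    ¬ Dense (⋃ n, τ (GHist x (n + 1)))

/-- `Ω_x`: the family of subsets of `X` having `x` in their closure. -/
def OmegaPt {X : Type*} [TopologicalSpace X] (x : X) : Set (Set X) :=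
  {A | x ∈ closure A}

/-- ONE has a winning strategy in Gruenhage's game `G^c_{O,P}(X,x)`. -/
def OneWinsGruenhage {X : Type*} [TopologicalSpace X] (x : X) : Prop :=
  ∃ σ : List X → Set X, (∀ h, IsOpen (σ h) ∧ x ∈ σ h) ∧
    ∀ y : ℕ → X, (∀ n, y n ∈ σ (GHist y n)) → x ∈ closure (Set.range y)

/-- TWO has a winning strategy in Gruenhage's game `G^c_{O,P}(X,x)`. -/
def TwoWinsGruenhage {X : Type*} [TopologicalSpace X] (x : X) : Prop :=
  ∃ τ : List (Set X) → X, ∀ V : ℕ → Set X,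
    (∀ n, IsOpen (V n) ∧ x ∈ V n) →
    (∀ n, τ (GHist V (n + 1)) ∈ V n) ∧
    x ∉ closure (Set.range fun n => τ (GHist V (n + 1)))

/-- ONE has a winning strategy in the compact-open game on `X`. -/
def OneWinsCompactOpen (X : Type*) [TopologicalSpace X] : Prop :=
  ∃ σ : List (Set X) → Set X, (∀ h, IsCompact (σ h)) ∧
    ∀ U : ℕ → Set X, (∀ n, IsOpen (U n) ∧ σ (GHist U n) ⊆ U n) →
      (⋃ n, U n) = Set.univ

/-- `⪯` is downwards `P`-compatible. -/
def DownwardsCompat {α β : Type*} (R : α → β → Prop) (le : β → β → Prop) : Prop :=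
  ∀ a b₁ b₂, R a b₁ → R a b₂ → ∃ b, R a b ∧ le b b₁ ∧ le b b₂

/-- `⪯` is upwards `Q`-compatible. -/
def UpwardsCompat {γ β : Type*} (T : γ → β → Prop) (le : β → β → Prop) : Prop :=
  ∀ c b₁ b₂, T c b₁ → le b₁ b₂ → T c b₂

/-- `⪯` is countably downwards `P`-compatible. -/
def CountablyDownwardsCompat {α β : Type*} (R : α → β → Prop) (le : β → β → Prop) : Prop :=
  ∀ a, ∀ E : Set β, E.Countable → E.Nonempty → (∀ b ∈ E, R a b) →
    ∃ b', R a b' ∧ ∀ b ∈ E, le b' b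

/-- A relation is `ℵ₀`-preserving if some partial order on `B` is both upwards
compatible and countably downwards compatible with it. -/
def Aleph0Preserving {α β : Type*} (R : α → β → Prop) : Prop :=
  ∃ le : β → β → Prop, IsPartialOrder β le ∧
    UpwardsCompat R le ∧ CountablyDownwardsCompat R le

/-- `Dom_γ(T)`: the γ-dominating sequences of the relation `T`. -/
def GDomGamma {γ β : Type*} (T : γ → β → Prop) : Set (ℕ → β) :=
  {z | ∀ c : γ, {n : ℕ | ¬ T c (z n)}.Finite}

/-- ONE has a winning strategy in the game `G_γ(P,Q)`. -/
def OneWinsGgamma {α β γ : Type*} (R : α → β → Prop) (T : γ → β → Prop) : Prop :=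
  ∃ σ : List β → α, ∀ b : ℕ → β,
    (∀ n, R (σ (GHist b n)) (b n)) → b ∈ GDomGamma T

/-- TWO has a winning strategy in the game `G_γ(P,Q)`. -/
def TwoWinsGgamma {α β γ : Type*} (R : α → β → Prop) (T : γ → β → Prop) : Prop :=
  ∃ τ : List α → β, ∀ a : ℕ → α,
    (∀ n, R (a n) (τ (GHist a (n + 1)))) ∧
    (fun n => τ (GHist a (n + 1))) ∉ GDomGamma T

/-- ONE has a winning strategy in the game `G₁(𝒜, Dom_γ(T))`. -/
def OneWinsG1gamma {β γ : Type*} (𝒜 : Set (Set β)) (T : γ → β → Prop) : Prop :=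
  ∃ σ : List β → Set β, (∀ h, σ h ∈ 𝒜) ∧
    ∀ b : ℕ → β, (∀ n, b n ∈ σ (GHist b n)) → b ∉ GDomGamma T

/-- TWO has a winning strategy in the game `G₁(𝒜, Dom_γ(T))`. -/
def TwoWinsG1gamma {β γ : Type*} (𝒜 : Set (Set β)) (T : γ → β → Prop) : Prop :=
  ∃ τ : List (Set β) → β, ∀ S : ℕ → Set β, (∀ n, S n ∈ 𝒜) →
    (∀ n, τ (GHist S (n + 1)) ∈ S n) ∧
    (fun n => τ (GHist S (n + 1))) ∈ GDomGamma T

/-- The `ℵ₀`-modification of a relation: moves become nonempty countable subsets of `B`,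
dominated pointwise. -/
def CountMod {α β : Type*} (R : α → β → Prop) :
    α → {E : Set β // E.Countable ∧ E.Nonempty} → Prop :=
  fun a E => ∀ b ∈ E.1, R a b

namespace MengerProdAux
set_option linter.unusedSectionVars false

/-! ### Generic machinery for the Menger game on a space `Z`. -/

section OneSpace

variable {Z : Type*} [TopologicalSpace Z]

/-- A finite history of moves of ONE is legal if every entry is an open cover. -/
def MLegal (l : List (Set (Set Z))) : Prop := ∀ c ∈ l, c ∈ OpenCovers Z

/-- The winning property of a strategy for TWO in the Menger game (body of `TwoWinsGfin`). -/
def MWin (t : List (Set (Set Z)) → Set (Set Z)) : Prop :=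
  ∀ S : ℕ → Set (Set Z), (∀ n, S n ∈ OpenCovers Z) →
    (∀ n, t (GHist S (n + 1)) ⊆ S n ∧ (t (GHist S (n + 1))).Finite) ∧
    (⋃ n, t (GHist S (n + 1))) ∈ OpenCovers Z

theorem univ_mem_openCovers : {(Set.univ : Set Z)} ∈ OpenCovers Z := by
  constructor
  · intro U hU; rw [Set.mem_singleton_iff] at hU; subst hU; exact isOpen_univ
  · simp

theorem ghist_zero {β : Type*} (b : ℕ → β) : GHist b 0 = [] := by
  simp [GHist]

theorem ghist_length {β : Type*} (b : ℕ → β) (n : ℕ) : (GHist b n).length = n := by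
  simp [GHist]

theorem ghist_getElem {β : Type*} (b : ℕ → β) (n i : ℕ) (h : i < (GHist b n).length) :
    (GHist b n)[i] = b i := by
  simp [GHist]

theorem ghist_succ {β : Type*} (b : ℕ → β) (n : ℕ) :
    GHist b (n + 1) = GHist b n ++ [b n] := by
  apply List.ext_getElem
  · simp [GHist]
  · intro i h1 h2
    rw [ghist_getElem]
    rcases lt_or_ge i n with h | h
    · rw [List.getElem_append_left (by rwa [ghist_length])]
      rw [ghist_getElem]
    · have hi : i = n := by rw [ghist_length] at h1; omega
      subst hi
      rw [List.getElem_concat_length (by rw [ghist_length])]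

theorem ghist_mem {β : Type*} {b : ℕ → β} {n : ℕ} {c : β} (h : c ∈ GHist b n) :
    ∃ i, i < n ∧ b i = c := by
  rw [GHist, List.mem_ofFn] at h
  obtain ⟨i, hi⟩ := h
  exact ⟨i, i.2, hi⟩

theorem mlegal_nil : MLegal ([] : List (Set (Set Z))) := by intro c hc; simp at hc

theorem mlegal_snoc {l : List (Set (Set Z))} {U : Set (Set Z)}
    (hl : MLegal l) (hU : U ∈ OpenCovers Z) : MLegal (l ++ [U]) := by
  intro c hc
  rcases List.mem_append.1 hc with h | h
  · exact hl c h
  · rw [List.mem_singleton] at h; subst h; exact hU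

/-- From the winning property: any single legal move gets a legal (finite sub-)response. -/
theorem mwin_step {t : List (Set (Set Z)) → Set (Set Z)} (ht : MWin t)
    {l : List (Set (Set Z))} {U : Set (Set Z)} (hl : MLegal l) (hU : U ∈ OpenCovers Z) :
    t (l ++ [U]) ⊆ U ∧ (t (l ++ [U])).Finite := by
  classical
  set L := l ++ [U] with hL
  have hLlen : L.length = l.length + 1 := by simp [hL]
  set S : ℕ → Set (Set Z) := fun k =>
    if h : k < L.length then L[k] else {Set.univ} with hSdef
  have hS : ∀ n, S n ∈ OpenCovers Z := by
    intro n
    by_cases h : n < L.length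
    · simp only [hSdef, dif_pos h]
      have hmem : L[n] ∈ L := List.getElem_mem _
      rcases List.mem_append.1 hmem with h' | h'
      · exact hl _ h'
      · rw [List.mem_singleton] at h'; rw [h']; exact hU
    · simp only [hSdef, dif_neg h]; exact univ_mem_openCovers
  have h1 := (ht S hS).1 l.length
  have hG : GHist S (l.length + 1) = L := by
    apply List.ext_getElem (by rw [ghist_length]; omega)
    intro i h1i h2i
    rw [ghist_getElem]
    simp only [hSdef, dif_pos h2i]
  have hSl : S l.length = U := by
    have hlt : l.length < L.length := by omega
    simp only [hSdef, dif_pos hlt]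
    exact List.getElem_concat_length (l := l) (a := U) (i := l.length) rfl hlt
  rw [hG, hSl] at h1
  exact h1

/-- `z` has escaped along the history `l`: no response of TWO so far covers it. -/
def MEscape (t : List (Set (Set Z)) → Set (Set Z)) (z : Z) (l : List (Set (Set Z))) : Prop :=
  ∀ k, k < l.length → z ∉ ⋃₀ t (l.take (k + 1))

/-- The one-step extension relation among histories along which `z` escapes. -/
def MRel (t : List (Set (Set Z)) → Set (Set Z)) (z : Z) :
    List (Set (Set Z)) → List (Set (Set Z)) → Prop :=
  fun l' l => MLegal l' ∧ MEscape t z l' ∧ ∃ U, l' = l ++ [U]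

theorem mescape_nil (t : List (Set (Set Z)) → Set (Set Z)) (z : Z) :
    MEscape t z [] := by
  intro k hk; simp at hk

theorem mescape_snoc {t : List (Set (Set Z)) → Set (Set Z)} {z : Z}
    {l : List (Set (Set Z))} {U : Set (Set Z)}
    (hE : MEscape t z l) (hz : z ∉ ⋃₀ t (l ++ [U])) : MEscape t z (l ++ [U]) := by
  intro k hk
  rw [List.length_append, List.length_singleton] at hk
  rcases lt_or_ge k l.length with h | h
  · rw [List.take_append_of_le_length (by omega)]
    exact hE k h
  · have hkl : k = l.length := by omega
    subst hkl
    rw [List.take_of_length_le (by simp)]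
    exact hz

/-- Key well-foundedness: since TWO's strategy is winning, no point can escape forever. -/
theorem mrel_wf {t : List (Set (Set Z)) → Set (Set Z)} (ht : MWin t) (z : Z) :
    WellFounded (MRel t z) := by
  classical
  by_contra hwf
  have hex : ∃ a, ¬ Acc (MRel t z) a := by
    by_contra h
    push_neg at h
    exact hwf ⟨h⟩
  obtain ⟨a, ha⟩ := hex
  have step : ∀ l, ¬ Acc (MRel t z) l → ∃ l', MRel t z l' l ∧ ¬ Acc (MRel t z) l' := by
    intro l hl
    by_contra h
    push_neg at h
    exact hl (Acc.intro l fun l' hr => h l' hr)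
  let f : ℕ → {l : List (Set (Set Z)) // ¬ Acc (MRel t z) l} := fun n =>
    Nat.rec ⟨a, ha⟩ (fun _ p => ⟨(step p.1 p.2).choose, (step p.1 p.2).choose_spec.2⟩) n
  have hf : ∀ n, MRel t z (f (n + 1)).1 (f n).1 := fun n =>
    (step (f n).1 (f n).2).choose_spec.1
  set g : ℕ → List (Set (Set Z)) := fun n => (f n).1 with hgdef
  have hlen : ∀ n, (g n).length = (g 0).length + n := by
    intro n
    induction n with
    | zero => rfl
    | succ n ih =>
      obtain ⟨U, hU⟩ := (hf n).2.2
      have hg1 : g (n + 1) = g n ++ [U] := hU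
      rw [hg1, List.length_append, List.length_singleton, ih]
      omega
  have hcoh : ∀ m n, m ≤ n → ∀ k, (hk : k < (g m).length) → (hk' : k < (g n).length) →
      (g n)[k] = (g m)[k] := by
    intro m n hmn
    induction n, hmn using Nat.le_induction with
    | base => intro k hk hk'; rfl
    | succ n hmn ih =>
      intro k hk hk'
      obtain ⟨U, hU⟩ := (hf n).2.2
      have hg : g (n + 1) = g n ++ [U] := hU
      have hkn : k < (g n).length := by
        rw [hlen n]
        have := hlen m
        omega
      calc (g (n + 1))[k] = (g n ++ [U])[k]'(by rw [← hg]; exact hk') := by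
            congr 1
        _ = (g n)[k] := List.getElem_append_left hkn
        _ = (g m)[k] := ih k hk hkn
  set S : ℕ → Set (Set Z) := fun k =>
    if h : k < (g (k + 1)).length then (g (k + 1))[k] else {Set.univ} with hSdef
  have hklt : ∀ k : ℕ, k < (g (k + 1)).length := by
    intro k; have := hlen (k + 1); omega
  have hSk : ∀ k, S k = (g (k + 1))[k]'(hklt k) := by
    intro k; simp only [hSdef, dif_pos (hklt k)]
  have hS : ∀ n, S n ∈ OpenCovers Z := by
    intro n
    rw [hSk]
    exact (hf n).1 _ (List.getElem_mem _)
  have hcov := (ht S hS).2.2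
  have hz : z ∈ ⋃₀ (⋃ n, t (GHist S (n + 1))) := by rw [hcov]; exact Set.mem_univ z
  obtain ⟨A, hA, hzA⟩ := hz
  rw [Set.mem_iUnion] at hA
  obtain ⟨n, hAn⟩ := hA
  have hGn : GHist S (n + 1) = (g (n + 1)).take (n + 1) := by
    apply List.ext_getElem
    · rw [ghist_length, List.length_take]
      have := hlen (n + 1)
      omega
    · intro i h1i h2i
      rw [ghist_getElem, List.getElem_take]
      rw [hSk]
      have hi : i ≤ n := by rw [ghist_length] at h1i; omega
      exact (hcoh (i + 1) (n + 1) (by omega) i (hklt i)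
        (by have h1 := hlen (n + 1); have h2 := hlen (i + 1); omega)).symm
  have hesc : MEscape t z (g (n + 1)) := (hf n).2.1
  have := hesc n (by have := hlen (n + 1); omega)
  rw [← hGn] at this
  exact this ⟨A, hAn, hzA⟩

end OneSpace

end MengerProdAux
namespace MengerProdAux
set_option linter.unusedSectionVars false

section TwoSpaces

variable {X Y : Type*} [TopologicalSpace X] [TopologicalSpace Y]

private theorem pW_ex (𝒲 : Set (Set (X × Y))) (p : X × Y) :
    ∃ W, 𝒲 ∈ OpenCovers (X × Y) → W ∈ 𝒲 ∧ p ∈ W := by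
  by_cases h : 𝒲 ∈ OpenCovers (X × Y)
  · have hp : p ∈ ⋃₀ 𝒲 := by rw [h.2]; exact Set.mem_univ p
    obtain ⟨W, hW, hpW⟩ := hp
    exact ⟨W, fun _ => ⟨hW, hpW⟩⟩
  · exact ⟨∅, fun hc => absurd hc h⟩

/-- A chosen member of the cover `𝒲` containing the point `p`. -/
noncomputable def pW (𝒲 : Set (Set (X × Y))) (p : X × Y) : Set (X × Y) :=
  (pW_ex 𝒲 p).choose

theorem pW_spec {𝒲 : Set (Set (X × Y))} (h : 𝒲 ∈ OpenCovers (X × Y)) (p : X × Y) :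
    pW 𝒲 p ∈ 𝒲 ∧ p ∈ pW 𝒲 p :=
  (pW_ex 𝒲 p).choose_spec h

private theorem pUV_ex (𝒲 : Set (Set (X × Y))) (p : X × Y) :
    ∃ uv : Set X × Set Y, 𝒲 ∈ OpenCovers (X × Y) →
      IsOpen uv.1 ∧ IsOpen uv.2 ∧ p.1 ∈ uv.1 ∧ p.2 ∈ uv.2 ∧ uv.1 ×ˢ uv.2 ⊆ pW 𝒲 p := by
  by_cases h : 𝒲 ∈ OpenCovers (X × Y)
  · obtain ⟨hW, hp⟩ := pW_spec h p
    have hop : IsOpen (pW 𝒲 p) := h.1 _ hW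
    obtain ⟨u, v, hu, hv, h1, h2, hsub⟩ :=
      isOpen_prod_iff.1 hop p.1 p.2 (by simpa using hp)
    exact ⟨(u, v), fun _ => ⟨hu, hv, h1, h2, hsub⟩⟩
  · exact ⟨(∅, ∅), fun hc => absurd hc h⟩

/-- A chosen basic rectangle around `p` inside `pW 𝒲 p`. -/
noncomputable def pU (𝒲 : Set (Set (X × Y))) (p : X × Y) : Set X := (pUV_ex 𝒲 p).choose.1

noncomputable def pV (𝒲 : Set (Set (X × Y))) (p : X × Y) : Set Y := (pUV_ex 𝒲 p).choose.2

theorem pUV_spec {𝒲 : Set (Set (X × Y))} (h : 𝒲 ∈ OpenCovers (X × Y)) (p : X × Y) :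
    IsOpen (pU 𝒲 p) ∧ IsOpen (pV 𝒲 p) ∧ p.1 ∈ pU 𝒲 p ∧ p.2 ∈ pV 𝒲 p ∧
      pU 𝒲 p ×ˢ pV 𝒲 p ⊆ pW 𝒲 p :=
  (pUV_ex 𝒲 p).choose_spec h

/-- The open cover of `X` induced by `𝒲` at level `y`. -/
noncomputable def UU (𝒲 : Set (Set (X × Y))) (y : Y) : Set (Set X) :=
  Set.range fun x => pU 𝒲 (x, y)

theorem UU_cover {𝒲 : Set (Set (X × Y))} (h : 𝒲 ∈ OpenCovers (X × Y)) (y : Y) :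
    UU 𝒲 y ∈ OpenCovers X := by
  constructor
  · rintro U ⟨x, rfl⟩
    exact (pUV_spec h (x, y)).1
  · apply Set.eq_univ_of_forall
    intro x
    exact ⟨pU 𝒲 (x, y), ⟨x, rfl⟩, (pUV_spec h (x, y)).2.2.1⟩

variable [Nonempty X] [Nonempty Y]
variable (tX : List (Set (Set X)) → Set (Set X)) (tY : List (Set (Set Y)) → Set (Set Y))

private theorem px_ex (𝒲 : Set (Set (X × Y))) (y : Y) (U' : Set X) :
    ∃ x : X, U' ∈ UU 𝒲 y → pU 𝒲 (x, y) = U' := by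
  by_cases h : U' ∈ UU 𝒲 y
  · obtain ⟨x, hx⟩ := h
    exact ⟨x, fun _ => hx⟩
  · exact ⟨Classical.arbitrary X, fun hc => absurd hc h⟩

noncomputable def px (𝒲 : Set (Set (X × Y))) (y : Y) (U' : Set X) : X :=
  (px_ex 𝒲 y U').choose

theorem px_spec {𝒲 : Set (Set (X × Y))} {y : Y} {U' : Set X} (h : U' ∈ UU 𝒲 y) :
    pU 𝒲 (px 𝒲 y U', y) = U' :=
  (px_ex 𝒲 y U').choose_spec h

/-- TWO's response on the `X`-side after history `h` against the induced cover at level `y`. -/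
noncomputable def FXf (h : List (Set (Set X))) (𝒲 : Set (Set (X × Y))) (y : Y) : Set (Set X) :=
  tX (h ++ [UU 𝒲 y])

/-- The neighborhood of `y` obtained by intersecting the `V`-sides of the rectangles
associated to TWO's `X`-side response. -/
noncomputable def VV1 (h : List (Set (Set X))) (𝒲 : Set (Set (X × Y))) (y : Y) : Set Y :=
  ⋂ U' ∈ FXf tX h 𝒲 y, pV 𝒲 (px 𝒲 y U', y)

/-- The induced open cover of `Y`. -/
noncomputable def VVc (h : List (Set (Set X))) (𝒲 : Set (Set (X × Y))) : Set (Set Y) :=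
  Set.range fun y => VV1 tX h 𝒲 y

theorem VVc_cover (htX : MWin tX) {h : List (Set (Set X))} {𝒲 : Set (Set (X × Y))}
    (hl : MLegal h) (h𝒲 : 𝒲 ∈ OpenCovers (X × Y)) :
    VVc tX h 𝒲 ∈ OpenCovers Y := by
  constructor
  · rintro V ⟨y, rfl⟩
    exact Set.Finite.isOpen_biInter (mwin_step htX hl (UU_cover h𝒲 y)).2
      fun U' _ => (pUV_spec h𝒲 (px 𝒲 y U', y)).2.1
  · apply Set.eq_univ_of_forall
    intro y
    refine ⟨VV1 tX h 𝒲 y, ⟨y, rfl⟩, ?_⟩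
    exact Set.mem_iInter₂.2 fun U' _ => (pUV_spec h𝒲 (px 𝒲 y U', y)).2.2.2.1

/-- TWO's response on the `Y`-side. -/
noncomputable def GYf (h : List (Set (Set X))) (g : List (Set (Set Y)))
    (𝒲 : Set (Set (X × Y))) : Set (Set Y) :=
  tY (g ++ [VVc tX h 𝒲])

private theorem py_ex (h : List (Set (Set X))) (𝒲 : Set (Set (X × Y))) (V' : Set Y) :
    ∃ y : Y, V' ∈ VVc tX h 𝒲 → VV1 tX h 𝒲 y = V' := by
  by_cases hm : V' ∈ VVc tX h 𝒲
  · obtain ⟨y, hy⟩ := hm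
    exact ⟨y, fun _ => hy⟩
  · exact ⟨Classical.arbitrary Y, fun hc => absurd hc hm⟩

noncomputable def py (h : List (Set (Set X))) (𝒲 : Set (Set (X × Y))) (V' : Set Y) : Y :=
  (py_ex tX h 𝒲 V').choose

theorem py_spec {h : List (Set (Set X))} {𝒲 : Set (Set (X × Y))} {V' : Set Y}
    (hm : V' ∈ VVc tX h 𝒲) : VV1 tX h 𝒲 (py tX h 𝒲 V') = V' :=
  (py_ex tX h 𝒲 V').choose_spec hm

/-- The finite selection made by TWO in the product game at position `(h, g)` against `𝒲`. -/
noncomputable def SelF (h : List (Set (Set X))) (g : List (Set (Set Y)))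
    (𝒲 : Set (Set (X × Y))) : Set (Set (X × Y)) :=
  ⋃ V' ∈ GYf tX tY h g 𝒲, ⋃ U' ∈ FXf tX h 𝒲 (py tX h 𝒲 V'),
    {pW 𝒲 (px 𝒲 (py tX h 𝒲 V') U', py tX h 𝒲 V')}

/-- The successor positions of a position in the bookkeeping tree. -/
noncomputable def Child (t : List (Set (Set X)) × List (Set (Set Y)))
    (𝒲 : Set (Set (X × Y))) : Set (List (Set (Set X)) × List (Set (Set Y))) :=
  insert (t.1, t.2 ++ [VVc tX t.1 𝒲])
    ((fun V' => (t.1 ++ [UU 𝒲 (py tX t.1 𝒲 V')], ([] : List (Set (Set Y))))) ''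
      GYf tX tY t.1 t.2 𝒲)

/-- The set of positions after a (reversed) history of moves of ONE in the product game. -/
noncomputable def Trev : List (Set (Set (X × Y))) →
    Set (List (Set (Set X)) × List (Set (Set Y)))
  | [] => {([], [])}
  | w :: l => ⋃ t ∈ Trev l, Child tX tY t w

noncomputable def prodStratAux : List (Set (Set (X × Y))) → Set (Set (X × Y))
  | [] => ∅
  | w :: l => ⋃ t ∈ Trev tX tY l, SelF tX tY t.1 t.2 w

/-- TWO's strategy in the product Menger game. -/
noncomputable def prodStrat (l : List (Set (Set (X × Y)))) : Set (Set (X × Y)) :=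
  prodStratAux tX tY l.reverse

theorem trev_spec (htX : MWin tX) (htY : MWin tY) (l : List (Set (Set (X × Y))))
    (hl : ∀ w ∈ l, w ∈ OpenCovers (X × Y)) :
    (Trev tX tY l).Finite ∧ ∀ t ∈ Trev tX tY l, MLegal t.1 ∧ MLegal t.2 := by
  induction l with
  | nil =>
    refine ⟨Set.finite_singleton _, ?_⟩
    rintro t ht
    simp only [Trev, Set.mem_singleton_iff] at ht
    subst ht
    exact ⟨mlegal_nil, mlegal_nil⟩
  | cons w l ih =>
    have hw : w ∈ OpenCovers (X × Y) := hl w (by simp)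
    have hl' : ∀ w' ∈ l, w' ∈ OpenCovers (X × Y) := fun w' h => hl w' (by simp [h])
    obtain ⟨hfin, hleg⟩ := ih hl'
    have hGfin : ∀ t ∈ Trev tX tY l, (GYf tX tY t.1 t.2 w).Finite := fun t ht =>
      (mwin_step htY (hleg t ht).2 (VVc_cover tX htX (hleg t ht).1 hw)).2
    constructor
    · rw [show Trev tX tY (w :: l) = ⋃ t ∈ Trev tX tY l, Child tX tY t w from by
        simp [Trev]]
      refine hfin.biUnion fun t ht => ?_
      exact ((hGfin t ht).image _).insert _
    · rintro t' ht'
      rw [show Trev tX tY (w :: l) = ⋃ t ∈ Trev tX tY l, Child tX tY t w from by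
        simp [Trev]] at ht'
      simp only [Set.mem_iUnion] at ht'
      obtain ⟨t, ht, htc⟩ := ht'
      rcases Set.mem_insert_iff.1 htc with rfl | ⟨V', _, rfl⟩
      · exact ⟨(hleg t ht).1, mlegal_snoc (hleg t ht).2 (VVc_cover tX htX (hleg t ht).1 hw)⟩
      · exact ⟨mlegal_snoc (hleg t ht).1 (UU_cover hw _), mlegal_nil⟩

theorem selF_spec (htX : MWin tX) (htY : MWin tY) {h : List (Set (Set X))}
    {g : List (Set (Set Y))} {𝒲 : Set (Set (X × Y))}
    (hl1 : MLegal h) (hl2 : MLegal g) (h𝒲 : 𝒲 ∈ OpenCovers (X × Y)) :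
    SelF tX tY h g 𝒲 ⊆ 𝒲 ∧ (SelF tX tY h g 𝒲).Finite := by
  constructor
  · intro A hA
    simp only [SelF, Set.mem_iUnion, Set.mem_singleton_iff] at hA
    obtain ⟨V', _, U', _, rfl⟩ := hA
    exact (pW_spec h𝒲 _).1
  · have hGfin := (mwin_step htY hl2 (VVc_cover tX htX hl1 h𝒲)).2
    refine hGfin.biUnion fun V' _ => ?_
    have hFfin := (mwin_step htX hl1 (UU_cover h𝒲 (py tX h 𝒲 V'))).2
    exact hFfin.biUnion fun U' _ => Set.finite_singleton _

theorem selF_cover (htX : MWin tX) (htY : MWin tY) {h : List (Set (Set X))}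
    {g : List (Set (Set Y))} {𝒲 : Set (Set (X × Y))}
    (hl1 : MLegal h) (hl2 : MLegal g) (h𝒲 : 𝒲 ∈ OpenCovers (X × Y))
    {V' : Set Y} (hV' : V' ∈ GYf tX tY h g 𝒲) {x : X} {y : Y} (hy : y ∈ V')
    {U' : Set X} (hU' : U' ∈ FXf tX h 𝒲 (py tX h 𝒲 V')) (hx : x ∈ U') :
    ∃ A ∈ SelF tX tY h g 𝒲, (x, y) ∈ A := by
  have hVmem : V' ∈ VVc tX h 𝒲 :=
    (mwin_step htY hl2 (VVc_cover tX htX hl1 h𝒲)).1 hV'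
  have hVeq : VV1 tX h 𝒲 (py tX h 𝒲 V') = V' := py_spec tX hVmem
  have hUmem : U' ∈ UU 𝒲 (py tX h 𝒲 V') :=
    (mwin_step htX hl1 (UU_cover h𝒲 (py tX h 𝒲 V'))).1 hU'
  have hUeq : pU 𝒲 (px 𝒲 (py tX h 𝒲 V') U', py tX h 𝒲 V') = U' := px_spec hUmem
  refine ⟨pW 𝒲 (px 𝒲 (py tX h 𝒲 V') U', py tX h 𝒲 V'), ?_, ?_⟩
  · simp only [SelF, Set.mem_iUnion, Set.mem_singleton_iff]
    exact ⟨V', hV', U', hU', rfl⟩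
  · apply (pUV_spec h𝒲 (px 𝒲 (py tX h 𝒲 V') U', py tX h 𝒲 V')).2.2.2.2
    refine Set.mk_mem_prod ?_ ?_
    · rw [hUeq]; exact hx
    · have hyV : y ∈ VV1 tX h 𝒲 (py tX h 𝒲 V') := by rw [hVeq]; exact hy
      exact Set.mem_iInter₂.1 hyV U' hU'

end TwoSpaces

end MengerProdAux
/-- If TWO has a winning strategy in the Menger game on `X` and on `Y`,
then TWO has a winning strategy in the Menger game on `X × Y`. -/
theorem statement11 {X Y : Type*} [TopologicalSpace X] [TopologicalSpace Y]
    (hX : TwoWinsGfin (OpenCovers X) (OpenCovers X))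
    (hY : TwoWinsGfin (OpenCovers Y) (OpenCovers Y)) :
    TwoWinsGfin (OpenCovers (X × Y)) (OpenCovers (X × Y)) := by
  classical
  open MengerProdAux in
  obtain ⟨tX, htX'⟩ := hX
  obtain ⟨tY, htY'⟩ := hY
  have htX : MengerProdAux.MWin tX := htX'
  have htY : MengerProdAux.MWin tY := htY'
  by_cases hne : Nonempty X ∧ Nonempty Y
  case neg =>
    have hempty : IsEmpty (X × Y) := by
      rcases not_and_or.1 hne with h | h
      · exact ⟨fun p => (not_nonempty_iff.1 h).false p.1⟩
      · exact ⟨fun p => (not_nonempty_iff.1 h).false p.2⟩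
    refine ⟨fun _ => ∅, fun S hS => ?_⟩
    refine ⟨fun n => ⟨Set.empty_subset _, Set.finite_empty⟩, ?_, ?_⟩
    · intro U hU; simp at hU
    · simp only [Set.iUnion_empty]
      rw [Set.sUnion_empty]
      exact (Set.univ_eq_empty_iff.2 hempty).symm
  case pos =>
  obtain ⟨hneX, hneY⟩ := hne
  refine ⟨MengerProdAux.prodStrat tX tY, fun S hS => ?_⟩
  set MA := MengerProdAux.prodStrat tX tY with hMA
  -- the positions tree at stage n
  set Tn : ℕ → Set (List (Set (Set X)) × List (Set (Set Y))) :=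
    fun n => MengerProdAux.Trev tX tY ((GHist S n).reverse) with hTndef
  have hrev : ∀ n : ℕ, (GHist S (n + 1)).reverse = S n :: (GHist S n).reverse := by
    intro n
    rw [MengerProdAux.ghist_succ]
    simp
  have hresp : ∀ n, MA (GHist S (n + 1)) =
      ⋃ t ∈ Tn n, MengerProdAux.SelF tX tY t.1 t.2 (S n) := by
    intro n
    rw [hMA, MengerProdAux.prodStrat, hrev n]
    simp [MengerProdAux.prodStratAux, hTndef]
  have hTnstep : ∀ n t, t ∈ Tn n →
      MengerProdAux.Child tX tY t (S n) ⊆ Tn (n + 1) := by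
    intro n t ht t' ht'
    show t' ∈ MengerProdAux.Trev tX tY ((GHist S (n + 1)).reverse)
    rw [hrev n]
    rw [show MengerProdAux.Trev tX tY (S n :: (GHist S n).reverse) =
      ⋃ t ∈ MengerProdAux.Trev tX tY ((GHist S n).reverse),
        MengerProdAux.Child tX tY t (S n) from by simp [MengerProdAux.Trev]]
    exact Set.mem_biUnion ht ht'
  have hTspec : ∀ n, (Tn n).Finite ∧
      ∀ t ∈ Tn n, MengerProdAux.MLegal t.1 ∧ MengerProdAux.MLegal t.2 := by
    intro n
    apply MengerProdAux.trev_spec tX tY htX htY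
    intro w hw
    rw [List.mem_reverse] at hw
    obtain ⟨i, _, rfl⟩ := MengerProdAux.ghist_mem hw
    exact hS i
  constructor
  · intro n
    rw [hresp n]
    constructor
    · refine Set.iUnion₂_subset fun t ht => ?_
      exact (MengerProdAux.selF_spec tX tY htX htY ((hTspec n).2 t ht).1
        ((hTspec n).2 t ht).2 (hS n)).1
    · refine (hTspec n).1.biUnion fun t ht => ?_
      exact (MengerProdAux.selF_spec tX tY htX htY ((hTspec n).2 t ht).1
        ((hTspec n).2 t ht).2 (hS n)).2
  · constructor
    · intro A hA
      rw [Set.mem_iUnion] at hA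
      obtain ⟨n, hAn⟩ := hA
      rw [hresp n] at hAn
      simp only [Set.mem_iUnion] at hAn
      obtain ⟨t, ht, hAt⟩ := hAn
      have hsub := (MengerProdAux.selF_spec tX tY htX htY ((hTspec n).2 t ht).1
        ((hTspec n).2 t ht).2 (hS n)).1
      exact (hS n).1 A (hsub hAt)
    · apply Set.eq_univ_of_forall
      rintro ⟨x, y⟩
      by_contra hp
      -- no selection ever contains (x, y)
      have hnc : ∀ n, ∀ t ∈ Tn n, ∀ A ∈ MengerProdAux.SelF tX tY t.1 t.2 (S n),
          (x, y) ∉ A := by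
        intro n t ht A hA hpA
        apply hp
        refine ⟨A, ?_, hpA⟩
        rw [Set.mem_iUnion]
        refine ⟨n, ?_⟩
        rw [hresp n]
        exact Set.mem_biUnion ht hA
      have key : ∀ h : List (Set (Set X)), MengerProdAux.MLegal h →
          MengerProdAux.MEscape tX x h →
          ∀ g : List (Set (Set Y)), MengerProdAux.MLegal g →
          MengerProdAux.MEscape tY y g →
          ∀ n : ℕ, (h, g) ∈ Tn n → False := by
        intro h₀
        refine (MengerProdAux.mrel_wf htX x).induction
          (C := fun h => MengerProdAux.MLegal h → MengerProdAux.MEscape tX x h →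
            ∀ g, MengerProdAux.MLegal g → MengerProdAux.MEscape tY y g →
            ∀ n, (h, g) ∈ Tn n → False) h₀ ?_
        intro h IHh hLh hEh g₀
        refine (MengerProdAux.mrel_wf htY y).induction
          (C := fun g => MengerProdAux.MLegal g → MengerProdAux.MEscape tY y g →
            ∀ n, (h, g) ∈ Tn n → False) g₀ ?_
        intro g IHg hLg hEg n hmem
        have h𝒲 : S n ∈ OpenCovers (X × Y) := hS n
        by_cases hca : ∃ V' ∈ MengerProdAux.GYf tX tY h g (S n), y ∈ V'
        · -- case (a): the Y-side response currently captures y;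
          -- x must escape the X-side response, so the X-rank drops and we reset g.
          obtain ⟨V', hV', hyV'⟩ := hca
          have hxF : x ∉ ⋃₀ tX (h ++ [MengerProdAux.UU (S n) (MengerProdAux.py tX h (S n) V')]) := by
            rintro ⟨U', hU', hxU'⟩
            obtain ⟨A, hA, hpA⟩ := MengerProdAux.selF_cover tX tY htX htY hLh hLg h𝒲
              hV' hyV' hU' hxU'
            exact hnc n (h, g) hmem A hA hpA
          have hrel : MengerProdAux.MRel tX x
              (h ++ [MengerProdAux.UU (S n) (MengerProdAux.py tX h (S n) V')]) h :=
            ⟨MengerProdAux.mlegal_snoc hLh (MengerProdAux.UU_cover h𝒲 _),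
             MengerProdAux.mescape_snoc hEh hxF, _, rfl⟩
          have hmem' : (h ++ [MengerProdAux.UU (S n) (MengerProdAux.py tX h (S n) V')],
              ([] : List (Set (Set Y)))) ∈ Tn (n + 1) := by
            apply hTnstep n (h, g) hmem
            exact Set.mem_insert_iff.2 (Or.inr ⟨V', hV', rfl⟩)
          exact IHh _ hrel hrel.1 hrel.2.1 [] MengerProdAux.mlegal_nil
            (MengerProdAux.mescape_nil tY y) (n + 1) hmem'
        · -- case (b): y escapes the Y-side response; the Y-rank drops, h is frozen.
          push_neg at hca
          have hyG : y ∉ ⋃₀ tY (g ++ [MengerProdAux.VVc tX h (S n)]) := by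
            rintro ⟨V', hV', hyV'⟩
            exact hca V' hV' hyV'
          have hrel : MengerProdAux.MRel tY y (g ++ [MengerProdAux.VVc tX h (S n)]) g :=
            ⟨MengerProdAux.mlegal_snoc hLg (MengerProdAux.VVc_cover tX htX hLh h𝒲),
             MengerProdAux.mescape_snoc hEg hyG, _, rfl⟩
          have hmem' : (h, g ++ [MengerProdAux.VVc tX h (S n)]) ∈ Tn (n + 1) := by
            apply hTnstep n (h, g) hmem
            exact Set.mem_insert _ _
          exact IHg _ hrel hrel.1 hrel.2.1 (n + 1) hmem'
      refine key [] MengerProdAux.mlegal_nil (MengerProdAux.mescape_nil tX x)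
        [] MengerProdAux.mlegal_nil (MengerProdAux.mescape_nil tY y) 0 ?_
      show (([], []) ∈ MengerProdAux.Trev tX tY ((GHist S 0).reverse))
      rw [MengerProdAux.ghist_zero]
      simp [MengerProdAux.Trev]
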